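/- Let ε₁ and ε₂ be two commutation factors on an abelian group Γ over a field K. Define Γ_{ε₁,ε₂} = {i ∈ Γ : ∀ j ∈ Γ, ε₁(i,j) = ε₂(i,j)} and R_{ε₁,ε₂} = {i ∈ Γ : ∀ j ∈ Γ, ε₁(i−j, j) = ε₂(i−j, j)}. Then: (a) if i ∈ R_{ε₁,ε₂} then −i ∈ R_{ε₁,ε₂}; (b) if i, j ∈ R_{ε₁,ε₂} then i + j ∈ Γ_{ε₁,ε₂}; (c) if ε₁(j,j) = ε₂(j,j) for all j ∈ Γ then R_{ε₁,ε₂} = Γ_{ε₁,ε₂}, and otherwise R_{ε₁,ε₂} ∩ Γ_{ε₁,ε₂} = ∅. -/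

import Mathlib

/-- A commutation factor on an abelian group `Γ` over a field `K`. -/
def IsCommFactor {Γ K : Type*} [AddCommGroup Γ] [Field K] (ε : Γ → Γ → Kˣ) : Prop :=
  (∀ i j, ε i j * ε j i = 1) ∧
  (∀ i j k, ε i (j + k) = ε i j * ε i k) ∧
  (∀ i j k, ε (i + j) k = ε i k * ε j k)

lemma cf_zero {Γ K : Type*} [AddCommGroup Γ] [Field K] {ε : Γ → Γ → Kˣ}
    (h : IsCommFactor ε) (j : Γ) : ε 0 j = 1 := by
  have h0 := h.2.2 0 0 j
  rw [add_zero] at h0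
  exact right_eq_mul.mp h0

lemma cf_neg {Γ K : Type*} [AddCommGroup Γ] [Field K] {ε : Γ → Γ → Kˣ}
    (h : IsCommFactor ε) (i j : Γ) : ε (-i) j = (ε i j)⁻¹ := by
  have hb := h.2.2 (-i) i j
  rw [neg_add_cancel, cf_zero h] at hb
  exact eq_inv_of_mul_eq_one_left hb.symm

lemma cf_sub {Γ K : Type*} [AddCommGroup Γ] [Field K] {ε : Γ → Γ → Kˣ}
    (h : IsCommFactor ε) (i j : Γ) : ε (i - j) j = ε i j * (ε j j)⁻¹ := by
  have hb := h.2.2 (i - j) j j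
  rw [sub_add_cancel] at hb
  rw [eq_comm, mul_inv_eq_iff_eq_mul, ← hb]

lemma cf_diag_inv {Γ K : Type*} [AddCommGroup Γ] [Field K] {ε : Γ → Γ → Kˣ}
    (h : IsCommFactor ε) (j : Γ) : (ε j j)⁻¹ = ε j j :=
  inv_eq_of_mul_eq_one_right (h.1 j j)

theorem statement8 {Γ K : Type*} [AddCommGroup Γ] [Field K]
    (ε₁ ε₂ : Γ → Γ → Kˣ) (h₁ : IsCommFactor ε₁) (h₂ : IsCommFactor ε₂) :
    (∀ i : Γ, (∀ j, ε₁ (i - j) j = ε₂ (i - j) j) → (∀ j, ε₁ (-i - j) j = ε₂ (-i - j) j)) ∧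
    (∀ i j : Γ, (∀ k, ε₁ (i - k) k = ε₂ (i - k) k) → (∀ k, ε₁ (j - k) k = ε₂ (j - k) k) →
      (∀ k, ε₁ (i + j) k = ε₂ (i + j) k)) ∧
    ((∀ j, ε₁ j j = ε₂ j j) →
      ∀ i : Γ, (∀ j, ε₁ (i - j) j = ε₂ (i - j) j) ↔ (∀ j, ε₁ i j = ε₂ i j)) ∧
    ((¬ ∀ j, ε₁ j j = ε₂ j j) →
      ∀ i : Γ, ¬ ((∀ j, ε₁ (i - j) j = ε₂ (i - j) j) ∧ (∀ j, ε₁ i j = ε₂ i j))) := by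
  set δ : Γ → Γ → Kˣ := fun i j => ε₁ i j * (ε₂ i j)⁻¹ with hδ
  have heq : ∀ i j : Γ, ε₁ i j = ε₂ i j ↔ δ i j = 1 := by
    intro i j; rw [hδ]; simp [mul_inv_eq_one]
  have hadd : ∀ i j k : Γ, δ (i + j) k = δ i k * δ j k := by
    intro i j k
    simp only [hδ, h₁.2.2, h₂.2.2, mul_inv]
    exact mul_mul_mul_comm _ _ _ _
  have hneg : ∀ i j : Γ, δ (-i) j = (δ i j)⁻¹ := by
    intro i j
    simp [hδ, cf_neg h₁, cf_neg h₂, mul_inv, mul_comm]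
  have hsub : ∀ i j : Γ, δ (i - j) j = δ i j * (δ j j)⁻¹ := by
    intro i j
    simp only [hδ, cf_sub h₁, cf_sub h₂, mul_inv, inv_inv]
    simp [mul_comm, mul_left_comm, mul_assoc]
  have hdiag : ∀ j : Γ, (δ j j)⁻¹ = δ j j := by
    intro j
    simp only [hδ, mul_inv, inv_inv, cf_diag_inv h₁, cf_diag_inv h₂]
  have hsq : ∀ j : Γ, δ j j * δ j j = 1 := by
    intro j; nth_rewrite 1 [← hdiag j]; exact inv_mul_cancel _
  have hR : ∀ i : Γ, (∀ j, ε₁ (i - j) j = ε₂ (i - j) j) ↔ (∀ j, δ i j = δ j j) := by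
    intro i
    constructor <;> intro h j <;> have := h j
    · rw [heq, hsub, mul_inv_eq_one] at this; exact this
    · rw [heq, hsub, mul_inv_eq_one]; exact this
  refine ⟨?_, ?_, ?_, ?_⟩
  · intro i hi j
    rw [hR] at hi
    rw [heq, hsub, hneg, hi j, hdiag j]
    exact hsq j
  · intro i j hi hj k
    rw [hR] at hi hj
    rw [heq, hadd, hi k, hj k]
    exact hsq k
  · intro hd i
    have hj1 : ∀ j, δ j j = 1 := fun j => (heq j j).mp (hd j)
    rw [hR]
    constructor <;> intro h j
    · rw [heq, h j, hj1 j]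
    · rw [hj1 j]; exact (heq i j).mp (h j)
  · rintro hd i ⟨hRi, hGi⟩
    apply hd
    intro j
    rw [heq]
    rw [hR] at hRi
    rw [← hRi j]
    exact (heq i j).mp (hGi j)
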